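/- Let V ⊂ ℝ be a finite nonempty set, q ∈ (2,4) and μ > 0. If 𝓔_{q,V}(μ) < 0, then there exists u ∈ H¹_μ(ℝ) with E_{q,V}(u) = 𝓔_{q,V}(μ); that is, a ground state of mass μ exists. -/

import Mathlib

open MeasureTheory intervalIntegral Filter Topology Set

/-- `u` is (the continuous representative of) an `H¹(ℝ)` function with weak
derivative `u'`: both `u` and `u'` are square-integrable and `u` is a
primitive of `u'`. -/
def InH1 (u u' : ℝ → ℝ) : Prop :=
  Integrable (fun x => (u x) ^ 2) ∧ Integrable (fun x => (u' x) ^ 2) ∧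
    ∀ a b : ℝ, u b - u a = ∫ x in a..b, u' x

/-- The mass `∫_ℝ u²`. -/
noncomputable def mass (u : ℝ → ℝ) : ℝ := ∫ x : ℝ, (u x) ^ 2

/-- The energy `E_{q,V}(u) = (1/2)∫ |u'|² − (1/q)∑_{v ∈ V} |u(v)|^q`,
for a set of vertices `V ⊆ ℝ`. -/
noncomputable def energy (q : ℝ) (V : Set ℝ) (u u' : ℝ → ℝ) : ℝ :=
  (1 / 2) * (∫ x : ℝ, (u' x) ^ 2) - (1 / q) * ∑' v : V, |u (v : ℝ)| ^ q

/-- The set of energies of `H¹` functions of mass `μ`;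
its infimum is the ground-state level `𝓔_{q,V}(μ)`. -/
def levelSet (q : ℝ) (V : Set ℝ) (μ : ℝ) : Set ℝ :=
  {E | ∃ u u' : ℝ → ℝ, InH1 u u' ∧ mass u = μ ∧ E = energy q V u u'}

lemma volume_real_univ : (volume : Measure ℝ) Set.univ = ⊤ := by
  simpa using Real.volume_Ioi (a := 0) ▸ measure_mono (subset_univ (Set.Ioi (0:ℝ)))

-- an everywhere-≥ε function on ℝ is not integrable
lemma not_integrable_of_ge {f : ℝ → ℝ} {ε : ℝ} (hε : 0 < ε) (hf : ∀ x, ε ≤ f x) :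
    ¬ Integrable f (volume : Measure ℝ) := by
  intro hint
  have hc : Integrable (fun _ : ℝ => ε) volume := by
    refine hint.mono aestronglyMeasurable_const ?_
    refine Eventually.of_forall fun x => ?_
    have := hf x
    rw [Real.norm_eq_abs, Real.norm_eq_abs, abs_of_pos hε, abs_of_pos (lt_of_lt_of_le hε this)]
    exact this
  rcases integrable_const_iff.1 hc with h | h
  · exact hε.ne' h
  · have h := h.measure_univ_lt_top; rw [volume_real_univ] at h; exact (lt_irrefl _ h).elim

lemma InH1.aesm {u u' : ℝ → ℝ} (h : InH1 u u') (hm : mass u ≠ 0) :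
    AEStronglyMeasurable u' (volume : Measure ℝ) := by
  obtain ⟨hu2, hu'2, hftc⟩ := h
  by_cases hP : ∀ x : ℝ, ∃ ε > 0, AEStronglyMeasurable u' (volume.restrict (Set.Ioo (x - ε) (x + ε)))
  · -- cover ℝ by countably many good intervals using compactness of [-n,n]
    choose ε hε hsm using hP
    have hIcc : ∀ n : ℕ, AEStronglyMeasurable u' (volume.restrict (Set.Icc (-(n:ℝ)) n)) := by
      intro n
      have hcov : Set.Icc (-(n:ℝ)) n ⊆ ⋃ x ∈ Set.Icc (-(n:ℝ)) (n:ℝ), Set.Ioo (x - ε x) (x + ε x) := by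
        intro y hy
        exact Set.mem_biUnion hy (Set.mem_Ioo.2 ⟨by linarith [hε y], by linarith [hε y]⟩)
      obtain ⟨t, ht⟩ := isCompact_Icc.elim_finite_subcover_image
        (fun x _ => isOpen_Ioo) hcov
      obtain ⟨hts, htfin, htcov⟩ := ht
      haveI : Countable ↥t := htfin.countable
      have h1 : AEStronglyMeasurable u'
          (volume.restrict (⋃ x : t, Set.Ioo ((x:ℝ) - ε x) ((x:ℝ) + ε x))) := by
        refine AEStronglyMeasurable.mono_measure ?_ (Measure.restrict_iUnion_le)
        exact (aestronglyMeasurable_sum_measure_iff).2 fun x => hsm x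
      refine h1.mono_measure (Measure.restrict_mono ?_ le_rfl)
      refine htcov.trans ?_
      refine Set.iUnion₂_subset fun x hx => ?_
      exact Set.subset_iUnion_of_subset ⟨x, hx⟩ subset_rfl
    have huniv : (Set.univ : Set ℝ) = ⋃ n : ℕ, Set.Icc (-(n:ℝ)) n := by
      ext x
      simp only [Set.mem_univ, true_iff, Set.mem_iUnion, Set.mem_Icc]
      obtain ⟨n, hn⟩ := exists_nat_ge |x|
      exact ⟨n, by cases abs_le.1 hn; constructor <;> linarith⟩
    have : AEStronglyMeasurable u' (volume.restrict (⋃ n : ℕ, Set.Icc (-(n:ℝ)) n)) := by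
      refine AEStronglyMeasurable.mono_measure ?_ (Measure.restrict_iUnion_le)
      exact (aestronglyMeasurable_sum_measure_iff).2 hIcc
    simpa [← huniv] using this
  · push_neg at hP
    obtain ⟨x₀, hx₀⟩ := hP
    -- u' is not interval-integrable on any interval around x₀
    have key : ∀ a b : ℝ, a < x₀ → x₀ < b → u b = u a := by
      intro a b ha hb
      have hni : ¬ IntervalIntegrable u' volume a b := by
        intro hii
        have h1 : IntegrableOn u' (Set.Ioc a b) volume := hii.1
        have hsub : Set.Ioo (x₀ - min (x₀ - a) (b - x₀)) (x₀ + min (x₀ - a) (b - x₀)) ⊆ Set.Ioc a b := by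
          intro y hy
          constructor
          · have := hy.1
            have : x₀ - (x₀ - a) ≤ x₀ - min (x₀ - a) (b - x₀) := by
              have := min_le_left (x₀ - a) (b - x₀); linarith
            linarith [hy.1]
          · have := hy.2
            have : x₀ + min (x₀ - a) (b - x₀) ≤ x₀ + (b - x₀) := by
              have := min_le_right (x₀ - a) (b - x₀); linarith
            linarith [hy.2]
        have hpos : 0 < min (x₀ - a) (b - x₀) := lt_min (by linarith) (by linarith)
        have := (h1.mono_set hsub).aestronglyMeasurable
        exact hx₀ _ hpos this
      have := hftc a b
      rw [intervalIntegral.integral_undef hni] at this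
      linarith
    -- u is constant off x₀
    have hconst : ∀ y : ℝ, y ≠ x₀ → u y = u (x₀ + 1) := by
      intro y hy
      rcases lt_or_gt_of_ne hy with hlt | hgt
      · exact (key y (x₀ + 1) hlt (by linarith)).symm
      · have h1 : u (x₀ + max 1 (y - x₀) + 1) = u (x₀ - 1) := key _ _ (by linarith) (by
          have := le_max_left 1 (y - x₀); linarith)
        have h2 : u y = u (x₀ - 1) := by
          have hyb : y < x₀ + max 1 (y - x₀) + 1 := by
            have := le_max_right 1 (y - x₀); linarith
          have := key (x₀ - 1) y (by linarith) hgt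
          linarith [this]
        have h3 : u (x₀ + 1) = u (x₀ - 1) := key _ _ (by linarith) (by linarith)
        rw [h2, h3]
    -- so u^2 is a.e. constant; integrability forces the constant to be 0
    exfalso
    set k := u (x₀ + 1) with hk
    have hae : (fun x => u x ^ 2) =ᵐ[volume] (fun _ => k ^ 2) := by
      refine (ae_iff).2 (measure_mono_null ?_ (Real.volume_singleton (a := x₀)))
      intro y hy
      by_contra hne
      exact hy (by simp only []; rw [hconst y (by simpa using hne)])
    have hki : Integrable (fun _ : ℝ => k ^ 2) volume := (integrable_congr hae).1 hu2
    rcases integrable_const_iff.1 hki with h | h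
    · -- k = 0, so mass u = 0
      apply hm
      have : (fun x => u x ^ 2) =ᵐ[volume] (fun _ => (0:ℝ)) := by
        simpa [h] using hae
      simpa [mass] using integral_congr_ae this
    · have h := h.measure_univ_lt_top; rw [volume_real_univ] at h; exact (lt_irrefl _ h)

lemma InH1.memLp2 {u u' : ℝ → ℝ} (h : InH1 u u') (hm : mass u ≠ 0) :
    MemLp u' 2 (volume : Measure ℝ) :=
  (memLp_two_iff_integrable_sq (h.aesm hm)).2 h.2.1

lemma InH1.intervalIntegrable {u u' : ℝ → ℝ} (h : InH1 u u') (hm : mass u ≠ 0)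
    (a b : ℝ) : IntervalIntegrable u' volume a b := by
  rw [intervalIntegrable_iff]
  haveI : IsFiniteMeasure (volume.restrict (Set.uIoc a b)) := by
    constructor
    rw [Measure.restrict_apply_univ]
    exact measure_Ioc_lt_top
  exact ((h.memLp2 hm).restrict (Set.uIoc a b)).integrable (by norm_num)

lemma InH1.continuous {u u' : ℝ → ℝ} (h : InH1 u u') (hm : mass u ≠ 0) :
    Continuous u := by
  have : u = fun b => u 0 + ∫ x in (0:ℝ)..b, u' x := by
    funext b
    have := h.2.2 0 b
    linarith
  rw [this]
  exact continuous_const.add (intervalIntegral.continuous_primitive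
    (fun a b => h.intervalIntegrable hm a b) 0)

lemma InH1.integrableOn_mul {u u' : ℝ → ℝ} (h : InH1 u u') (hm : mass u ≠ 0)
    {s : Set ℝ} (hs : MeasurableSet s) {C : ℝ} (hC : ∀ x ∈ s, |u x| ≤ C)
    (hu'I : IntegrableOn u' s volume) :
    IntegrableOn (fun x => u x * u' x) s volume := by
  refine Integrable.bdd_mul (c := C) hu'I ((h.continuous hm).aestronglyMeasurable.restrict) ?_
  refine (ae_restrict_iff' hs).2 (Eventually.of_forall fun x hx => ?_)
  simpa [Real.norm_eq_abs] using hC x hx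

lemma InH1.ftc_sq_le {u u' : ℝ → ℝ} (h : InH1 u u') (hm : mass u ≠ 0)
    {a b : ℝ} (hab : a ≤ b) :
    ∫ x in Set.Ioc a b, u x * u' x = (u b ^ 2 - u a ^ 2) / 2 := by
  set I := Set.Ioc a b with hI
  have hmeasI : MeasurableSet I := measurableSet_Ioc
  have hu'I : IntegrableOn u' I volume := by
    have := (h.intervalIntegrable hm a b).1
    simpa [hI] using this
  -- bound for u on Icc a b
  obtain ⟨C, hC⟩ : ∃ C, ∀ x ∈ Set.Icc a b, |u x| ≤ C := by
    obtain ⟨C, hC⟩ := (isCompact_Icc (a := a) (b := b)).exists_bound_of_continuousOn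
      ((h.continuous hm).continuousOn)
    exact ⟨C, fun x hx => by simpa [Real.norm_eq_abs] using hC x hx⟩
  have hCI : ∀ x ∈ I, |u x| ≤ C := fun x hx => hC x (Set.Ioc_subset_Icc_self hx)
  have hQint : IntegrableOn (fun x => u x * u' x) I volume :=
    h.integrableOn_mul hm hmeasI hCI hu'I
  set c : ℝ := ∫ x in I, u' x with hc
  have hcval : c = u b - u a := by
    rw [hc, ← intervalIntegral.integral_of_le hab, ← h.2.2 a b]
  set Q : ℝ := ∫ x in I, u x * u' x with hQ
  -- step 1 : Q - u a * c = ∫_I (u x - u a) u' x =: J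
  have hJ1 : Q - u a * c = ∫ x in I, (u x - u a) * u' x := by
    rw [hQ, hc, ← MeasureTheory.integral_const_mul, ← integral_sub hQint (hu'I.const_mul (u a))]
    congr 1
    funext x
    ring
  -- step 2 : express (u x - u a) as an integral and use Fubini
  have hswap : ∫ x in I, (u x - u a) * u' x = ∫ y in I, (u b - u y) * u' y := by
    have hform : ∀ x ∈ I, (u x - u a) * u' x
        = (∫ y in I, (if y ≤ x then u' y else 0)) * u' x := by
      intro x hx
      congr 1
      have h1 : u x - u a = ∫ y in Set.Ioc a x, u' y := by
        rw [← intervalIntegral.integral_of_le hx.1.le, ← h.2.2 a x]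
      have h2 : ∫ y in I, (if y ≤ x then u' y else 0) = ∫ y in Set.Ioc a x, u' y := by
        rw [← MeasureTheory.integral_indicator hmeasI]
        rw [← MeasureTheory.integral_indicator (measurableSet_Ioc : MeasurableSet (Set.Ioc a x))]
        congr 1
        funext y
        by_cases hy : y ∈ Set.Ioc a x
        · rw [Set.indicator_of_mem hy]
          have : y ∈ I := ⟨hy.1, hy.2.trans hx.2⟩
          rw [Set.indicator_of_mem this, if_pos hy.2]
        · rw [Set.indicator_of_notMem hy]
          by_cases hyI : y ∈ I
          · rw [Set.indicator_of_mem hyI, if_neg (fun hle => hy ⟨hyI.1, hle⟩)]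
          · rw [Set.indicator_of_notMem hyI]
      rw [h1, ← h2]
    rw [setIntegral_congr_fun hmeasI hform]
    -- Fubini
    have hif : ∀ x y : ℝ, (if y ≤ x then u' y else 0) * u' x
        = {z : ℝ × ℝ | z.2 ≤ z.1}.indicator (fun z => u' z.2 * u' z.1) (x, y) := by
      intro x y
      by_cases hxy : y ≤ x
      · rw [if_pos hxy, Set.indicator_of_mem (by exact hxy)]
      · rw [if_neg hxy, Set.indicator_of_notMem (by exact hxy), zero_mul]
    have hintg : Integrable (Function.uncurry fun x y => (if y ≤ x then u' y else 0) * u' x)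
        ((volume.restrict I).prod (volume.restrict I)) := by
      have hbase : Integrable (fun z : ℝ × ℝ => u' z.2 * u' z.1)
          ((volume.restrict I).prod (volume.restrict I)) := by
        have := Integrable.mul_prod (L := ℝ) hu'I hu'I
        have hswapm : Integrable (fun z : ℝ × ℝ => u' z.2 * u' z.1)
            ((volume.restrict I).prod (volume.restrict I)) := by
          refine this.congr (Eventually.of_forall fun z => ?_)
          exact mul_comm _ _
        exact hswapm
      have := hbase.indicator (measurableSet_le measurable_snd measurable_fst)
      refine this.congr (Eventually.of_forall fun z => ?_)
      rw [Function.uncurry]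
      exact (hif z.1 z.2).symm
    have hswapped := MeasureTheory.integral_integral_swap hintg
    rw [show (∫ x in I, (∫ y in I, (if y ≤ x then u' y else 0)) * u' x)
        = ∫ x in I, ∫ y in I, (if y ≤ x then u' y else 0) * u' x from by
      congr 1; funext x; rw [← MeasureTheory.integral_mul_const]]
    rw [hswapped]
    refine setIntegral_congr_fun hmeasI fun y hy => ?_
    have hinner : ∫ x in I, (if y ≤ x then u' y else 0) * u' x
        = u' y * ∫ x in I, (if y ≤ x then u' x else 0) := by
      rw [← MeasureTheory.integral_const_mul]
      congr 1
      funext x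
      by_cases hxy : y ≤ x
      · rw [if_pos hxy, if_pos hxy]
      · rw [if_neg hxy, if_neg hxy, zero_mul, mul_zero]
    rw [hinner]
    have h3 : ∫ x in I, (if y ≤ x then u' x else 0) = ∫ x in Set.Icc y b, u' x := by
      rw [← MeasureTheory.integral_indicator hmeasI,
        ← MeasureTheory.integral_indicator (measurableSet_Icc : MeasurableSet (Set.Icc y b))]
      congr 1
      funext x
      by_cases hx : x ∈ Set.Icc y b
      · rw [Set.indicator_of_mem hx]
        have : x ∈ I := ⟨hy.1.trans_le hx.1, hx.2⟩
        rw [Set.indicator_of_mem this, if_pos hx.1]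
      · rw [Set.indicator_of_notMem hx]
        by_cases hxI : x ∈ I
        · rw [Set.indicator_of_mem hxI, if_neg (fun hle => hx ⟨hle, hxI.2⟩)]
        · rw [Set.indicator_of_notMem hxI]
    have h4 : ∫ x in Set.Icc y b, u' x = u b - u y := by
      rw [MeasureTheory.integral_Icc_eq_integral_Ioc,
        ← intervalIntegral.integral_of_le hy.2, ← h.2.2 y b]
    rw [h3, h4]
    ring
  -- combine
  have hJ2 : ∫ y in I, (u b - u y) * u' y = u b * c - Q := by
    rw [hc, hQ, ← MeasureTheory.integral_const_mul, ← integral_sub (hu'I.const_mul (u b)) hQint]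
    congr 1
    funext y
    ring
  have : Q - u a * c = u b * c - Q := by rw [hJ1, hswap, hJ2]
  have hfin : 2 * Q = (u a + u b) * c := by linarith
  rw [hcval] at hfin
  have : Q = (u b ^ 2 - u a ^ 2) / 2 := by nlinarith
  exact this

lemma exists_sq_small {u : ℝ → ℝ} (hu2 : Integrable (fun x => u x ^ 2) volume) :
    ∀ ε : ℝ, 0 < ε → ∃ a : ℝ, u a ^ 2 < ε := by
  intro ε hε
  by_contra hcon
  push_neg at hcon
  exact not_integrable_of_ge hε hcon hu2

lemma InH1.integrable_mul {u u' : ℝ → ℝ} (h : InH1 u u') (hm : mass u ≠ 0)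
    {t : ℝ} (ht : 0 < t) :
    Integrable (fun x => u x * u' x) volume ∧
      ∫ x : ℝ, |u x * u' x| ≤ (t * mass u + (1/t) * ∫ y : ℝ, u' y ^ 2) / 2 := by
  have hdom : Integrable (fun x => (t * u x ^ 2 + (1/t) * u' x ^ 2) / 2) volume :=
    (((h.1.const_mul t).add (h.2.1.const_mul (1/t))).div_const 2)
  have hbound : ∀ x, |u x * u' x| ≤ (t * u x ^ 2 + (1/t) * u' x ^ 2) / 2 := by
    intro x
    have h1t : t * (1/t) = 1 := mul_one_div_cancel ht.ne'
    rcases abs_cases (u x * u' x) with ⟨he, _⟩ | ⟨he, _⟩ <;> rw [he] <;>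
      nlinarith [sq_nonneg (t * u x - u' x), sq_nonneg (t * u x + u' x), ht,
        mul_pos ht ht, h1t]
  have hasm : AEStronglyMeasurable (fun x => u x * u' x) volume :=
    ((h.continuous hm).aestronglyMeasurable).mul (h.aesm hm)
  have hint : Integrable (fun x => u x * u' x) volume := by
    refine Integrable.mono' hdom hasm (Eventually.of_forall fun x => ?_)
    rw [Real.norm_eq_abs]
    exact hbound x
  refine ⟨hint, ?_⟩
  calc ∫ x : ℝ, |u x * u' x| ≤ ∫ x : ℝ, (t * u x ^ 2 + (1/t) * u' x ^ 2) / 2 :=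
        integral_mono hint.abs hdom (fun x => hbound x)
    _ = (t * mass u + (1/t) * ∫ y : ℝ, u' y ^ 2) / 2 := by
        rw [mass]
        rw [MeasureTheory.integral_div, integral_add (h.1.const_mul t) (h.2.1.const_mul (1/t)),
          MeasureTheory.integral_const_mul, MeasureTheory.integral_const_mul]

lemma InH1.sq_le {u u' : ℝ → ℝ} (h : InH1 u u') (hm : mass u ≠ 0)
    {t : ℝ} (ht : 0 < t) (x : ℝ) :
    u x ^ 2 ≤ t * mass u + (1/t) * ∫ y : ℝ, u' y ^ 2 := by
  obtain ⟨hint, hle⟩ := h.integrable_mul hm ht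
  refine le_of_forall_pos_le_add fun ε hε => ?_
  obtain ⟨a, ha⟩ := exists_sq_small h.1 ε hε
  rcases le_total a x with hax | hxa
  · have := h.ftc_sq_le hm hax
    have habs : |∫ y in Set.Ioc a x, u y * u' y| ≤ ∫ y : ℝ, |u y * u' y| := by
      calc |∫ y in Set.Ioc a x, u y * u' y| ≤ ∫ y in Set.Ioc a x, |u y * u' y| := by
            simpa [Real.norm_eq_abs, abs_mul] using
              MeasureTheory.norm_integral_le_integral_norm
                (μ := volume.restrict (Set.Ioc a x)) (fun y => u y * u' y)
        _ ≤ ∫ y : ℝ, |u y * u' y| := setIntegral_le_integral hint.abs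
            (Eventually.of_forall fun y => abs_nonneg _)
    rw [this] at habs
    rcases abs_le.1 habs with ⟨h1, h2⟩
    nlinarith [hle]
  · have := h.ftc_sq_le hm hxa
    have habs : |∫ y in Set.Ioc x a, u y * u' y| ≤ ∫ y : ℝ, |u y * u' y| := by
      calc |∫ y in Set.Ioc x a, u y * u' y| ≤ ∫ y in Set.Ioc x a, |u y * u' y| := by
            simpa [Real.norm_eq_abs, abs_mul] using
              MeasureTheory.norm_integral_le_integral_norm
                (μ := volume.restrict (Set.Ioc x a)) (fun y => u y * u' y)
        _ ≤ ∫ y : ℝ, |u y * u' y| := setIntegral_le_integral hint.abs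
            (Eventually.of_forall fun y => abs_nonneg _)
    rw [this] at habs
    rcases abs_le.1 habs with ⟨h1, h2⟩
    nlinarith [hle]

lemma setIntegral_abs_le {f : ℝ → ℝ} (hsm : AEStronglyMeasurable f volume)
    (h2 : Integrable (fun x => f x ^ 2) volume) {s : Set ℝ} (hs : MeasurableSet s)
    (hfin : volume s ≠ ⊤) {t : ℝ} (ht : 0 < t) :
    IntegrableOn f s volume ∧
      ∫ x in s, |f x| ≤ (t * (volume s).toReal + (1/t) * ∫ y : ℝ, f y ^ 2) / 2 := by
  haveI : IsFiniteMeasure (volume.restrict s) := by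
    constructor
    rw [Measure.restrict_apply_univ]
    exact lt_top_iff_ne_top.2 hfin
  have hmem : MemLp f 2 (volume.restrict s) :=
    ((memLp_two_iff_integrable_sq hsm).2 h2).restrict s
  have hint : IntegrableOn f s volume := hmem.integrable (by norm_num)
  refine ⟨hint, ?_⟩
  have hdom : IntegrableOn (fun x => (t + (1/t) * f x ^ 2) / 2) s volume := by
    refine (((integrable_const t).add ((h2.restrict (s := s)).const_mul (1/t))).div_const 2)
  have hb : ∀ x, |f x| ≤ (t + (1/t) * f x ^ 2) / 2 := by
    intro x
    have h1t : t * (1/t) = 1 := mul_one_div_cancel ht.ne'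
    rcases abs_cases (f x) with ⟨he, _⟩ | ⟨he, _⟩ <;> rw [he] <;>
      nlinarith [sq_nonneg (t - f x), sq_nonneg (t + f x), ht, h1t]
  calc ∫ x in s, |f x| ≤ ∫ x in s, (t + (1/t) * f x ^ 2) / 2 :=
        integral_mono hint.abs hdom hb
    _ = (t * (volume s).toReal + (1/t) * ∫ y in s, f y ^ 2) / 2 := by
        rw [MeasureTheory.integral_div, integral_add (integrable_const t)
          ((h2.restrict (s := s)).const_mul (1/t)), MeasureTheory.integral_const_mul,
          setIntegral_const, smul_eq_mul, mul_comm, Measure.real]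
    _ ≤ (t * (volume s).toReal + (1/t) * ∫ y : ℝ, f y ^ 2) / 2 := by
        have : ∫ y in s, f y ^ 2 ≤ ∫ y : ℝ, f y ^ 2 :=
          setIntegral_le_integral h2 (Eventually.of_forall fun y => sq_nonneg _)
        have h1t : 0 < 1/t := by positivity
        gcongr

lemma abs_intervalIntegral_le_sqrt {f : ℝ → ℝ} (hsm : AEStronglyMeasurable f volume)
    (h2 : Integrable (fun x => f x ^ 2) volume) {a b : ℝ} (hab : a ≤ b) :
    |∫ x in a..b, f x| ≤ Real.sqrt ((∫ y : ℝ, f y ^ 2) * (b - a)) := by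
  set K := ∫ y : ℝ, f y ^ 2 with hK
  have hK0 : 0 ≤ K := integral_nonneg fun y => sq_nonneg _
  have hvol : volume (Set.Ioc a b) = ENNReal.ofReal (b - a) := Real.volume_Ioc
  have hvolR : (volume (Set.Ioc a b)).toReal = b - a := by
    rw [hvol, ENNReal.toReal_ofReal (by linarith)]
  have hfin : volume (Set.Ioc a b) ≠ ⊤ := by rw [hvol]; exact ENNReal.ofReal_ne_top
  have key : ∀ t : ℝ, 0 < t → |∫ x in a..b, f x| ≤ (t * (b - a) + (1/t) * K) / 2 := by
    intro t ht
    obtain ⟨hint, hle⟩ := setIntegral_abs_le hsm h2 measurableSet_Ioc hfin ht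
    rw [intervalIntegral.integral_of_le hab]
    calc |∫ x in Set.Ioc a b, f x| ≤ ∫ x in Set.Ioc a b, |f x| := by
          simpa [Real.norm_eq_abs] using
            MeasureTheory.norm_integral_le_integral_norm
              (μ := volume.restrict (Set.Ioc a b)) f
      _ ≤ (t * (volume (Set.Ioc a b)).toReal + (1/t) * K) / 2 := hle
      _ = (t * (b - a) + (1/t) * K) / 2 := by rw [hvolR]
  rcases eq_or_lt_of_le hab with rfl | hlt
  · simp [Real.sqrt_nonneg]
  rcases eq_or_lt_of_le hK0 with hK0' | hKpos
  · -- K = 0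
    have : ∀ ε : ℝ, 0 < ε → |∫ x in a..b, f x| ≤ 0 + ε := by
      intro ε hε
      have ht : 0 < 2 * ε / (b - a) := div_pos (by linarith) (by linarith)
      have := key _ ht
      rw [← hK0'] at this
      calc |∫ x in a..b, f x| ≤ (2 * ε / (b - a) * (b - a) + (2 * ε / (b - a))⁻¹ * 0) / 2 := by
            simpa [one_div] using this
        _ = 0 + ε := by
            have hba : b - a ≠ 0 := by linarith
            field_simp
            ring
    have h0 : |∫ x in a..b, f x| ≤ 0 := le_of_forall_pos_le_add this
    calc |∫ x in a..b, f x| ≤ 0 := h0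
      _ ≤ _ := Real.sqrt_nonneg _
  · -- K > 0
    have hL : 0 < b - a := by linarith
    set t := Real.sqrt (K / (b - a)) with htdef
    have ht : 0 < t := Real.sqrt_pos.2 (div_pos hKpos hL)
    have := key t ht
    have h1 : t = Real.sqrt K / Real.sqrt (b - a) := by rw [htdef, Real.sqrt_div hK0]
    have h2 : t * (b - a) = Real.sqrt K * Real.sqrt (b - a) := by
      rw [h1, div_mul_eq_mul_div, mul_div_assoc, Real.div_sqrt]
    have h3 : (1/t) * K = Real.sqrt (b - a) * Real.sqrt K := by
      rw [h1, one_div, inv_div, div_mul_eq_mul_div, mul_div_assoc, Real.div_sqrt]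
    have heq : (t * (b - a) + (1/t) * K) / 2 = Real.sqrt (K * (b - a)) := by
      rw [h2, h3, Real.sqrt_mul hK0]
      ring
    rw [heq] at this
    exact this

lemma rpow_le_eps_mul {θ : ℝ} (hθ0 : 0 < θ) (hθ1 : θ < 1) {ε : ℝ} (hε : 0 < ε)
    {x : ℝ} (hx : 0 ≤ x) :
    x ^ θ ≤ ε * x + (1/ε) ^ (θ/(1-θ)) := by
  have h1θ : 0 < 1 - θ := by linarith
  have hεinv : (0:ℝ) < 1/ε := by positivity
  rcases le_total x ((1/ε) ^ (1/(1-θ))) with hle | hge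
  · have h1 : x ^ θ ≤ ((1/ε) ^ (1/(1-θ))) ^ θ := Real.rpow_le_rpow hx hle hθ0.le
    have h2 : ((1/ε) ^ (1/(1-θ))) ^ θ = (1/ε) ^ (θ/(1-θ)) := by
      rw [← Real.rpow_mul hεinv.le]
      congr 1
      field_simp
    have h3 : 0 ≤ ε * x := by positivity
    calc x ^ θ ≤ (1/ε) ^ (θ/(1-θ)) := h2 ▸ h1
      _ ≤ ε * x + (1/ε) ^ (θ/(1-θ)) := by linarith
  · have hbase : (0:ℝ) < (1/ε) ^ (1/(1-θ)) := Real.rpow_pos_of_pos hεinv _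
    have hx0 : 0 < x := lt_of_lt_of_le hbase hge
    have hsplit : x ^ θ * x ^ (1-θ) = x := by
      rw [← Real.rpow_add hx0]
      simp
    have hmono : ((1/ε) ^ (1/(1-θ))) ^ (1-θ) ≤ x ^ (1-θ) :=
      Real.rpow_le_rpow hbase.le hge h1θ.le
    have hval : ((1/ε) ^ (1/(1-θ))) ^ (1-θ) = 1/ε := by
      rw [← Real.rpow_mul hεinv.le]
      rw [one_div_mul_cancel h1θ.ne']
      exact Real.rpow_one _
    have hge2 : 1/ε ≤ x ^ (1-θ) := hval ▸ hmono
    have hxθpos : 0 < x ^ θ := Real.rpow_pos_of_pos hx0 _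
    have : x ^ θ * (1/ε) ≤ x ^ θ * x ^ (1-θ) :=
      mul_le_mul_of_nonneg_left hge2 hxθpos.le
    rw [hsplit] at this
    have h4 : x ^ θ ≤ ε * x := by
      rw [div_le_iff₀ hε] at *
      nlinarith [this, hε]
    have h5 : 0 ≤ (1/ε) ^ (θ/(1-θ)) := (Real.rpow_pos_of_pos hεinv _).le
    linarith

lemma abs_rpow_eq_sq_rpow (t q : ℝ) : |t| ^ q = (t ^ 2) ^ (q / 2) := by
  have h1 : (t:ℝ) ^ 2 = |t| ^ (2:ℝ) := by
    rw [show ((2:ℝ)) = ((2:ℕ):ℝ) by norm_num, Real.rpow_natCast]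
    rw [sq_abs]
  rw [h1, ← Real.rpow_mul (abs_nonneg t)]
  congr 1
  ring

lemma energy_lb (V : Set ℝ) (hfin : V.Finite) (q μ : ℝ) (hq : 2 < q) (hq' : q < 4)
    (hμ : 0 < μ) :
    ∃ C : ℝ, 0 ≤ C ∧ ∀ u u' : ℝ → ℝ, InH1 u u' → mass u = μ →
      (1/4) * (∫ x : ℝ, u' x ^ 2) - C ≤ energy q V u u' := by
  classical
  haveI := hfin.fintype
  set n : ℝ := (Fintype.card V : ℝ) with hn
  have hn0 : 0 ≤ n := by positivity
  have hqpos : (0:ℝ) < q := by linarith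
  set c : ℝ := n * (μ + 1) ^ (q/2) / q with hc
  have hc0 : 0 ≤ c := by
    apply div_nonneg _ hqpos.le
    exact mul_nonneg hn0 (Real.rpow_nonneg (by linarith) _)
  set θ : ℝ := q / 4 with hθ
  have hθ0 : 0 < θ := by rw [hθ]; linarith
  have hθ1 : θ < 1 := by rw [hθ]; linarith
  set ε : ℝ := 1 / (4 * (c + 1)) with hε
  have hεpos : 0 < ε := by rw [hε]; positivity
  set δ : ℝ := (1/ε) ^ (θ/(1-θ)) with hδ
  have hδ0 : 0 ≤ δ := Real.rpow_nonneg (by positivity) _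
  refine ⟨1/4 + c * δ, by positivity, ?_⟩
  intro u u' h hm
  have hmne : mass u ≠ 0 := by rw [hm]; exact hμ.ne'
  set K : ℝ := ∫ x : ℝ, u' x ^ 2 with hK
  have hK0 : 0 ≤ K := integral_nonneg fun x => sq_nonneg _
  -- pointwise bound on u(v)^2
  have hsq : ∀ x : ℝ, u x ^ 2 ≤ (μ + 1) * Real.sqrt (K + 1) := by
    intro x
    have ht : (0:ℝ) < Real.sqrt (K + 1) := Real.sqrt_pos.2 (by linarith)
    have := h.sq_le hmne ht x
    rw [hm] at this
    have hKle : (1 / Real.sqrt (K+1)) * K ≤ Real.sqrt (K + 1) := by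
      rw [one_div, inv_mul_eq_div, div_le_iff₀ ht]
      rw [Real.mul_self_sqrt (by linarith)]
      linarith
    have hμle : Real.sqrt (K+1) * μ ≤ Real.sqrt (K+1) * μ := le_rfl
    calc u x ^ 2 ≤ Real.sqrt (K+1) * μ + (1 / Real.sqrt (K+1)) * K := this
      _ ≤ Real.sqrt (K+1) * μ + Real.sqrt (K+1) := by linarith
      _ = (μ + 1) * Real.sqrt (K + 1) := by ring
  -- bound on the nonlinear term
  have hNbound : (∑' v : V, |u (v:ℝ)| ^ q) ≤ n * ((μ+1) ^ (q/2) * (K+1) ^ (q/4)) := by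
    rw [tsum_fintype]
    have hterm : ∀ v : V, |u (v:ℝ)| ^ q ≤ (μ+1) ^ (q/2) * (K+1) ^ (q/4) := by
      intro v
      rw [abs_rpow_eq_sq_rpow]
      have h1 : (u (v:ℝ)) ^ 2 ≤ (μ + 1) * Real.sqrt (K + 1) := hsq _
      have h2 : ((u (v:ℝ)) ^ 2) ^ (q/2) ≤ ((μ + 1) * Real.sqrt (K + 1)) ^ (q/2) :=
        Real.rpow_le_rpow (sq_nonneg _) h1 (by linarith)
      refine h2.trans (le_of_eq ?_)
      rw [Real.mul_rpow (by linarith) (Real.sqrt_nonneg _)]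
      congr 1
      rw [Real.sqrt_eq_rpow, ← Real.rpow_mul (by linarith : (0:ℝ) ≤ K + 1)]
      congr 1
      ring
    calc (∑ v : V, |u (v:ℝ)| ^ q) ≤ ∑ _v : V, (μ+1) ^ (q/2) * (K+1) ^ (q/4) :=
          Finset.sum_le_sum fun v _ => hterm v
      _ = n * ((μ+1) ^ (q/2) * (K+1) ^ (q/4)) := by
          rw [Finset.sum_const, nsmul_eq_mul]
          simp [hn]
  -- conclude
  have hrp : (K+1) ^ θ ≤ ε * (K+1) + δ := rpow_le_eps_mul hθ0 hθ1 hεpos (by linarith)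
  have hce : c * ε ≤ 1/4 := by
    rw [hε]
    rw [mul_one_div, div_le_div_iff₀ (by positivity) (by norm_num)]
    linarith
  have hmain : (1/q) * (∑' v : V, |u (v:ℝ)| ^ q) ≤ (1/4) * (K + 1) + c * δ := by
    have h1 : (1/q) * (∑' v : V, |u (v:ℝ)| ^ q) ≤ c * (K+1) ^ θ := by
      rw [hc, hθ]
      calc (1/q) * (∑' v : V, |u (v:ℝ)| ^ q)
          ≤ (1/q) * (n * ((μ+1) ^ (q/2) * (K+1) ^ (q/4))) := by
            apply mul_le_mul_of_nonneg_left hNbound (by positivity)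
        _ = n * (μ + 1) ^ (q/2) / q * (K+1) ^ (q/4) := by ring
    refine h1.trans ?_
    calc c * (K+1) ^ θ ≤ c * (ε * (K+1) + δ) := mul_le_mul_of_nonneg_left hrp hc0
      _ = (c * ε) * (K+1) + c * δ := by ring
      _ ≤ (1/4) * (K+1) + c * δ := by
          have : 0 ≤ K + 1 := by linarith
          nlinarith [hce]
  rw [energy]
  have : (1/2) * K - ((1/4) * (K+1) + c * δ) ≥ (1/4) * K - (1/4 + c * δ) := by linarith
  linarith [hmain]

lemma volume_Ioc_ne_top {a b : ℝ} : volume (Set.Ioc a b) ≠ ⊤ := by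
  rw [Real.volume_Ioc]; exact ENNReal.ofReal_ne_top

noncomputable def indL2 (a b : ℝ) : Lp ℝ 2 (volume : Measure ℝ) :=
  indicatorConstLp 2 (measurableSet_Ioc (a := a) (b := b)) volume_Ioc_ne_top (1:ℝ)

lemma inner_L2_eq (f g : Lp ℝ 2 (volume : Measure ℝ)) :
    (inner ℝ f g : ℝ) = ∫ x : ℝ, f x * g x := by
  rw [L2.inner_def]
  refine integral_congr_ae (Eventually.of_forall fun x => ?_)
  simp [RCLike.inner_apply, conj_trivial]
  ring

lemma inner_indL2 (w : Lp ℝ 2 (volume : Measure ℝ)) (a b : ℝ) :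
    (inner ℝ w (indL2 a b) : ℝ) = ∫ x in Set.Ioc a b, w x := by
  rw [inner_L2_eq]
  have hae : (indL2 a b : ℝ → ℝ) =ᵐ[volume] (Set.Ioc a b).indicator (fun _ => (1:ℝ)) :=
    indicatorConstLp_coeFn
  have h1 : (fun x => w x * indL2 a b x) =ᵐ[volume]
      (Set.Ioc a b).indicator (fun x => w x) := by
    filter_upwards [hae] with x hx
    rw [hx]
    by_cases hmem : x ∈ Set.Ioc a b
    · rw [Set.indicator_of_mem hmem, Set.indicator_of_mem hmem, mul_one]
    · rw [Set.indicator_of_notMem hmem, Set.indicator_of_notMem hmem, mul_zero]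
  rw [integral_congr_ae h1, MeasureTheory.integral_indicator measurableSet_Ioc]

set_option maxHeartbeats 1000000 in
set_option synthInstance.maxHeartbeats 200000 in
lemma weak_limit_L2 (w : ℕ → Lp ℝ 2 (volume : Measure ℝ)) (M : ℝ)
    (hM : ∀ n, ‖w n‖ ≤ M)
    (hconv : ∀ a b : ℝ, ∃ l : ℝ,
      Tendsto (fun n => (inner ℝ (w n) (indL2 a b) : ℝ)) atTop (𝓝 l)) :
    ∃ g : Lp ℝ 2 (volume : Measure ℝ),
      (∀ a b : ℝ, Tendsto (fun n => (inner ℝ (w n) (indL2 a b) : ℝ))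
        atTop (𝓝 (inner ℝ g (indL2 a b) : ℝ))) ∧
      Tendsto (fun n => (inner ℝ (w n) g : ℝ)) atTop (𝓝 (‖g‖ ^ 2)) := by
  classical
  have hM0 : 0 ≤ M := le_trans (norm_nonneg (w 0)) (hM 0)
  set A : Submodule ℝ (Lp ℝ 2 (volume : Measure ℝ)) :=
    { carrier := {φ : Lp ℝ 2 (volume : Measure ℝ) | ∃ l : ℝ, Tendsto (fun n => (inner ℝ (w n) φ : ℝ)) atTop (𝓝 l)}
      add_mem' := by
        rintro φ ψ ⟨l₁, h₁⟩ ⟨l₂, h₂⟩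
        exact ⟨l₁ + l₂, by
          have := h₁.add h₂
          refine Tendsto.congr (fun n => ?_) this
          rw [inner_add_right]⟩
      zero_mem' := ⟨0, by
        refine Tendsto.congr (fun n => ?_) tendsto_const_nhds
        rw [inner_zero_right]⟩
      smul_mem' := by
        rintro c φ ⟨l, h⟩
        exact ⟨c * l, by
          have := h.const_mul c
          refine Tendsto.congr (fun n => ?_) this
          rw [real_inner_smul_right]⟩ } with hA
  have hAclosed : IsClosed (A : Set (Lp ℝ 2 (volume : Measure ℝ))) := by
    refine IsSeqClosed.isClosed ?_
    intro φs φ hmem hlim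
    have hcauchy : CauchySeq (fun n => (inner ℝ (w n) φ : ℝ)) := by
      rw [Metric.cauchySeq_iff]
      intro ε hε
      obtain ⟨k, hk⟩ : ∃ k, ‖φs k - φ‖ < ε / (4 * (M + 1)) := by
        have := (tendsto_iff_norm_sub_tendsto_zero.1 hlim)
        obtain ⟨k, hk⟩ := (Metric.tendsto_atTop.1 this) (ε / (4 * (M + 1)))
          (by positivity)
        refine ⟨k, ?_⟩
        have := hk k le_rfl
        rwa [Real.dist_eq, sub_zero, abs_of_nonneg (norm_nonneg _)] at this
      obtain ⟨lk, hlk⟩ := hmem k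
      have hck : CauchySeq (fun n => (inner ℝ (w n) (φs k) : ℝ)) := hlk.cauchySeq
      obtain ⟨N, hN⟩ := (Metric.cauchySeq_iff.1 hck) (ε / 2) (by positivity)
      refine ⟨N, fun m hm n hn => ?_⟩
      have key : ∀ j, |(inner ℝ (w j) φ : ℝ) - (inner ℝ (w j) (φs k) : ℝ)| ≤ ε / 4 := by
        intro j
        have h1 : (inner ℝ (w j) φ : ℝ) - (inner ℝ (w j) (φs k) : ℝ)
            = inner ℝ (w j) (φ - φs k) := by rw [inner_sub_right]
        rw [h1]
        calc |(inner ℝ (w j) (φ - φs k) : ℝ)| ≤ ‖w j‖ * ‖φ - φs k‖ :=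
              abs_real_inner_le_norm _ _
          _ ≤ M * (ε / (4 * (M + 1))) := by
              have h2 : ‖φ - φs k‖ < ε / (4 * (M+1)) := by
                rw [norm_sub_rev]; exact hk
              have := hM j
              apply mul_le_mul this h2.le (norm_nonneg _) hM0
          _ ≤ ε / 4 := by
              rw [show M * (ε / (4 * (M + 1))) = (M * ε) / (4 * (M + 1)) by ring]
              rw [div_le_div_iff₀ (by positivity) (by norm_num : (0:ℝ) < 4)]
              nlinarith
      have hmn := hN m hm n hn
      rw [Real.dist_eq] at hmn ⊢
      have d1 := key m
      have d2 := key n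
      have : (inner ℝ (w m) φ : ℝ) - (inner ℝ (w n) φ : ℝ)
          = ((inner ℝ (w m) φ : ℝ) - (inner ℝ (w m) (φs k) : ℝ))
            + ((inner ℝ (w m) (φs k) : ℝ) - (inner ℝ (w n) (φs k) : ℝ))
            + ((inner ℝ (w n) (φs k) : ℝ) - (inner ℝ (w n) φ : ℝ)) := by ring
      rw [this]
      calc |_ + _ + _| ≤ |(inner ℝ (w m) φ : ℝ) - (inner ℝ (w m) (φs k) : ℝ)|
            + |(inner ℝ (w m) (φs k) : ℝ) - (inner ℝ (w n) (φs k) : ℝ)|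
            + |(inner ℝ (w n) (φs k) : ℝ) - (inner ℝ (w n) φ : ℝ)| := by
              exact (abs_add_three _ _ _)
        _ < ε := by
            rw [abs_sub_comm ((inner ℝ (w n) (φs k) : ℝ))] at *
            have := abs_sub_comm ((inner ℝ (w n) (φs k) : ℝ)) ((inner ℝ (w n) φ : ℝ))
            linarith [d1, d2, hmn]
    obtain ⟨l, hl⟩ := cauchySeq_tendsto_of_complete hcauchy
    exact ⟨l, hl⟩
  have hex : ∀ φ : A, ∃ l : ℝ,
      Tendsto (fun n => (inner ℝ (w n) (φ : Lp ℝ 2 (volume : Measure ℝ)) : ℝ)) atTop (𝓝 l) :=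
    fun φ => φ.2
  choose Tf hTf using hex
  have hadd : ∀ φ ψ : A, Tf (φ + ψ) = Tf φ + Tf ψ := by
    intro φ ψ
    refine tendsto_nhds_unique (hTf (φ + ψ)) ?_
    have := (hTf φ).add (hTf ψ)
    refine Tendsto.congr (fun n => ?_) this
    rw [Submodule.coe_add, inner_add_right]
  have hsmul : ∀ (c : ℝ) (φ : A), Tf (c • φ) = c * Tf φ := by
    intro c φ
    refine tendsto_nhds_unique (hTf (c • φ)) ?_
    have := (hTf φ).const_mul c
    refine Tendsto.congr (fun n => ?_) this
    rw [Submodule.coe_smul, real_inner_smul_right]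
  have hbound : ∀ φ : A, |Tf φ| ≤ M * ‖φ‖ := by
    intro φ
    refine le_of_tendsto (hTf φ).abs (Eventually.of_forall fun n => ?_)
    calc |(inner ℝ (w n) (φ : Lp ℝ 2 (volume : Measure ℝ)) : ℝ)|
          ≤ ‖w n‖ * ‖(φ : Lp ℝ 2 (volume : Measure ℝ))‖ := abs_real_inner_le_norm _ _
      _ ≤ M * ‖φ‖ := mul_le_mul_of_nonneg_right (hM n) (norm_nonneg _)
  let Tlin : A →ₗ[ℝ] ℝ :=
    { toFun := Tf
      map_add' := hadd
      map_smul' := by intro c φ; simpa using hsmul c φ }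
  let Tcont : A →L[ℝ] ℝ := LinearMap.mkContinuous Tlin M (by
    intro φ
    simpa [Real.norm_eq_abs, Tlin] using hbound φ)
  haveI : CompleteSpace A := IsClosed.completeSpace_coe (hs := hAclosed)
  set g₀ : A := (InnerProductSpace.toDual ℝ A).symm Tcont with hg₀
  have hriesz : ∀ φ : A, (inner ℝ g₀ φ : ℝ) = Tcont φ := by
    intro φ
    rw [hg₀]
    exact InnerProductSpace.toDual_symm_apply
  set g : Lp ℝ 2 (volume : Measure ℝ) := (g₀ : Lp ℝ 2 (volume : Measure ℝ)) with hg
  have hgmem : g ∈ A := g₀.2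
  have hlim_all : ∀ φ : A, Tendsto
      (fun n => (inner ℝ (w n) (φ : Lp ℝ 2 (volume : Measure ℝ)) : ℝ)) atTop
      (𝓝 ((inner ℝ g (φ : Lp ℝ 2 (volume : Measure ℝ)) : ℝ))) := by
    intro φ
    have h1 : (inner ℝ g (φ : Lp ℝ 2 (volume : Measure ℝ)) : ℝ) = (inner ℝ g₀ φ : ℝ) :=
      (Submodule.coe_inner A g₀ φ).symm
    rw [h1, hriesz φ]
    exact hTf φ
  refine ⟨g, ?_, ?_⟩
  · intro a b
    obtain ⟨l, hl⟩ := hconv a b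
    exact hlim_all ⟨indL2 a b, ⟨l, hl⟩⟩
  · have := hlim_all ⟨g, hgmem⟩
    rwa [show (inner ℝ g g : ℝ) = ‖g‖ ^ 2 from real_inner_self_eq_norm_sq g] at this

lemma seq_extract (v : ℕ → ℝ × ℝ × (ℚ → ℝ)) (S1 S2 S3 : ℝ)
    (h1 : ∀ n, |(v n).1| ≤ S1) (h2 : ∀ n, |(v n).2.1| ≤ S2)
    (h3 : ∀ n r, |(v n).2.2 r| ≤ S3) :
    ∃ (φ : ℕ → ℕ) (L : ℝ × ℝ × (ℚ → ℝ)), StrictMono φ ∧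
      Tendsto (fun n => (v (φ n)).1) atTop (𝓝 L.1) ∧
      Tendsto (fun n => (v (φ n)).2.1) atTop (𝓝 L.2.1) ∧
      ∀ r : ℚ, Tendsto (fun n => (v (φ n)).2.2 r) atTop (𝓝 (L.2.2 r)) := by
  set C : Set (ℝ × ℝ × (ℚ → ℝ)) :=
    Set.Icc (-S1) S1 ×ˢ (Set.Icc (-S2) S2 ×ˢ Set.pi Set.univ fun _ => Set.Icc (-S3) S3)
    with hC
  have hCcomp : IsCompact C :=
    (isCompact_Icc).prod ((isCompact_Icc).prod
      (isCompact_univ_pi fun _ => isCompact_Icc))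
  have hmem : ∀ n, v n ∈ C := fun n =>
    ⟨abs_le.1 (h1 n), abs_le.1 (h2 n), fun r _ => abs_le.1 (h3 n r)⟩
  obtain ⟨L, hLC, φ, hφ, hconv⟩ := hCcomp.isSeqCompact hmem
  refine ⟨φ, L, hφ, ?_, ?_, ?_⟩
  · exact (continuous_fst.tendsto L).comp hconv
  · exact (continuous_fst.tendsto L.2).comp ((continuous_snd.tendsto L).comp hconv)
  · intro r
    have h2nd : Tendsto (fun n => (v (φ n)).2.2) atTop (𝓝 L.2.2) :=
      (continuous_snd.tendsto L.2).comp ((continuous_snd.tendsto L).comp hconv)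
    exact (tendsto_pi_nhds.1 h2nd) r

lemma conv_all (G : ℕ → ℝ → ℝ) (M : ℝ)
    (hH : ∀ (n : ℕ) (x y : ℝ), |G n x - G n y| ≤ M * Real.sqrt |x - y|)
    (hQ : ∀ r : ℚ, ∃ l, Tendsto (fun n => G n (r:ℝ)) atTop (𝓝 l)) (x : ℝ) :
    ∃ l, Tendsto (fun n => G n x) atTop (𝓝 l) := by
  have hM0 : 0 ≤ M := by
    have h := hH 0 0 1
    have h0 : (0:ℝ) ≤ |G 0 0 - G 0 1| := abs_nonneg _
    have : |(0:ℝ) - 1| = 1 := by norm_num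
    rw [this, Real.sqrt_one, mul_one] at h
    linarith
  have hcauchy : CauchySeq (fun n => G n x) := by
    rw [Metric.cauchySeq_iff]
    intro ε hε
    set δ : ℝ := (ε / (4 * (M + 1))) ^ 2 with hδ
    have hδpos : 0 < δ := by positivity
    obtain ⟨r, hr⟩ := exists_rat_near x hδpos
    have hsmall : M * Real.sqrt |x - (r:ℝ)| ≤ ε / 4 := by
      have h1 : Real.sqrt |x - (r:ℝ)| ≤ ε / (4 * (M + 1)) := by
        rw [show ε / (4 * (M + 1)) = Real.sqrt δ by
          rw [hδ, Real.sqrt_sq (by positivity)]]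
        exact Real.sqrt_le_sqrt hr.le
      calc M * Real.sqrt |x - (r:ℝ)| ≤ M * (ε / (4 * (M + 1))) :=
            mul_le_mul_of_nonneg_left h1 hM0
        _ = (M * ε) / (4 * (M + 1)) := by ring
        _ ≤ ε / 4 := by
            rw [div_le_div_iff₀ (by positivity) (by norm_num : (0:ℝ) < 4)]
            nlinarith
    obtain ⟨lr, hlr⟩ := hQ r
    obtain ⟨N, hN⟩ := (Metric.cauchySeq_iff.1 hlr.cauchySeq) (ε / 4) (by positivity)
    refine ⟨N, fun m hm n hn => ?_⟩
    have d1 : |G m x - G m (r:ℝ)| ≤ ε / 4 := (hH m x r).trans hsmall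
    have d2 : |G n (r:ℝ) - G n x| ≤ ε / 4 := by
      rw [abs_sub_comm]
      exact (hH n x r).trans hsmall
    have d3 := hN m hm n hn
    rw [Real.dist_eq] at d3 ⊢
    have hdecomp : G m x - G n x = (G m x - G m (r:ℝ)) + (G m (r:ℝ) - G n (r:ℝ))
        + (G n (r:ℝ) - G n x) := by ring
    rw [hdecomp]
    calc |_ + _ + _| ≤ |G m x - G m (r:ℝ)| + |G m (r:ℝ) - G n (r:ℝ)|
          + |G n (r:ℝ) - G n x| := abs_add_three _ _ _
      _ < ε := by linarith
  exact cauchySeq_tendsto_of_complete hcauchy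

lemma integrable_sq_of_bounds (u : ℝ → ℝ) (hc : Continuous u) (μ0 : ℝ) (hμ0 : 0 ≤ μ0)
    (h : ∀ R : ℝ, 0 ≤ R → ∫ x in Set.Icc (-R) R, u x ^ 2 ≤ μ0) :
    Integrable (fun x => u x ^ 2) volume ∧ ∫ x : ℝ, u x ^ 2 ≤ μ0 := by
  have hcsq : Continuous (fun x => u x ^ 2) := hc.pow 2
  set f : ℝ → ENNReal := fun x => ENNReal.ofReal (u x ^ 2) with hf
  have hfmeas : Measurable f := ENNReal.measurable_ofReal.comp hcsq.measurable
  set fn : ℕ → ℝ → ENNReal := fun n => (Set.Icc (-(n:ℝ)) n).indicator f with hfn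
  have hfnmeas : ∀ n, Measurable (fn n) := fun n =>
    (hfmeas.indicator measurableSet_Icc)
  have hmono : Monotone fn := by
    intro m n hmn x
    rw [hfn]
    simp only []
    by_cases hx : x ∈ Set.Icc (-(m:ℝ)) m
    · rw [Set.indicator_of_mem hx, Set.indicator_of_mem
        (Set.Icc_subset_Icc (by exact_mod_cast neg_le_neg (Nat.cast_le.2 hmn))
          (by exact_mod_cast Nat.cast_le.2 hmn) hx)]
    · rw [Set.indicator_of_notMem hx]
      exact zero_le
  have hsup : ∀ x, ⨆ n, fn n x = f x := by
    intro x
    apply le_antisymm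
    · exact iSup_le fun n => Set.indicator_le_self _ _ x
    · obtain ⟨n, hn⟩ := exists_nat_ge |x|
      refine le_iSup_of_le n (le_of_eq ?_)
      rw [hfn]
      simp only []
      rw [Set.indicator_of_mem]
      rcases abs_le.1 hn with ⟨h1, h2⟩
      exact ⟨by linarith, by linarith⟩
  have hint_n : ∀ n : ℕ, ∫⁻ x, fn n x ≤ ENNReal.ofReal μ0 := by
    intro n
    rw [hfn]
    simp only []
    rw [lintegral_indicator measurableSet_Icc]
    have hion : IntegrableOn (fun x => u x ^ 2) (Set.Icc (-(n:ℝ)) n) volume :=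
      hcsq.integrableOn_Icc
    rw [← MeasureTheory.ofReal_integral_eq_lintegral_ofReal hion
      (Eventually.of_forall fun x => sq_nonneg _)]
    exact ENNReal.ofReal_le_ofReal (h n (by positivity))
  have hlim : ∫⁻ x, f x ≤ ENNReal.ofReal μ0 := by
    have h1 : ∫⁻ x, f x = ⨆ n, ∫⁻ x, fn n x := by
      rw [← lintegral_iSup hfnmeas hmono]
      congr 1
      funext x
      rw [hsup x]
    rw [h1]
    exact iSup_le hint_n
  have hfin : HasFiniteIntegral (fun x => u x ^ 2) volume := by
    rw [hasFiniteIntegral_iff_ofReal (Eventually.of_forall fun x => sq_nonneg _)]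
    exact lt_of_le_of_lt hlim ENNReal.ofReal_lt_top
  have hint : Integrable (fun x => u x ^ 2) volume := ⟨hcsq.aestronglyMeasurable, hfin⟩
  refine ⟨hint, ?_⟩
  rw [MeasureTheory.integral_eq_lintegral_of_nonneg_ae
    (Eventually.of_forall fun x => sq_nonneg _) hcsq.aestronglyMeasurable]
  exact ENNReal.toReal_le_of_le_ofReal hμ0 hlim

lemma continuous_of_sqrt_hold {U : ℝ → ℝ} {c : ℝ} (hc : 0 ≤ c)
    (h : ∀ x y : ℝ, |U x - U y| ≤ c * Real.sqrt |x - y|) : Continuous U := by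
  rw [Metric.continuous_iff]
  intro x ε hε
  refine ⟨(ε / (c + 1)) ^ 2, by positivity, fun y hy => ?_⟩
  rw [Real.dist_eq] at hy ⊢
  calc |U y - U x| ≤ c * Real.sqrt |y - x| := h y x
    _ ≤ c * (ε / (c + 1)) := by
        refine mul_le_mul_of_nonneg_left ?_ hc
        rw [show ε / (c + 1) = Real.sqrt ((ε / (c + 1)) ^ 2) by
          rw [Real.sqrt_sq (by positivity)]]
        exact Real.sqrt_le_sqrt hy.le
    _ < ε := by
        rw [mul_div_assoc']
        rw [div_lt_iff₀ (by positivity)]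
        nlinarith


set_option maxHeartbeats 4000000 in
/-- If `V ⊂ ℝ` is finite and nonempty, `q ∈ (2,4)`, `μ > 0` and
`𝓔_{q,V}(μ) < 0`, then a ground state of mass `μ` exists. -/
theorem stmt3 (V : Set ℝ) (hfin : V.Finite) (hne : V.Nonempty) (q μ : ℝ)
    (hq : 2 < q) (hq' : q < 4) (hμ : 0 < μ) (hneg : sInf (levelSet q V μ) < 0) :
    ∃ u u' : ℝ → ℝ, InH1 u u' ∧ mass u = μ ∧
      energy q V u u' = sInf (levelSet q V μ) := by
  classical
  haveI := hfin.fintype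
  have hqpos : (0:ℝ) < q := by linarith
  set E0 := sInf (levelSet q V μ) with hE0
  have hne' : (levelSet q V μ).Nonempty := by
    by_contra hcon
    rw [Set.not_nonempty_iff_eq_empty] at hcon
    rw [hE0, hcon, Real.sInf_empty] at hneg
    exact lt_irrefl 0 hneg
  obtain ⟨C, hC0, hCb⟩ := energy_lb V hfin q μ hq hq' hμ
  have hbdd : BddBelow (levelSet q V μ) := by
    refine ⟨-C, fun E hE => ?_⟩
    obtain ⟨u, u', hIn, hmass, hEeq⟩ := hE
    have h1 := hCb u u' hIn hmass
    have hK0 : 0 ≤ ∫ x : ℝ, u' x ^ 2 := integral_nonneg fun x => sq_nonneg _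
    rw [hEeq]
    linarith
  have hE0mem : ∀ E ∈ levelSet q V μ, E0 ≤ E := fun E hE => csInf_le hbdd hE
  -- minimizing sequence
  have hms : ∀ n : ℕ, ∃ pr : (ℝ → ℝ) × (ℝ → ℝ), InH1 pr.1 pr.2 ∧ mass pr.1 = μ ∧
      energy q V pr.1 pr.2 < E0 + 1/(n+1) := by
    intro n
    obtain ⟨E, hEmem, hEl⟩ := Real.lt_sInf_add_pos hne'
      (show (0:ℝ) < 1/(n+1) by positivity)
    obtain ⟨u, u', hIn, hmass, hEeq⟩ := hEmem
    exact ⟨(u, u'), hIn, hmass, by rw [← hEeq]; exact hEl⟩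
  choose pr hIn hmass hEn using hms
  set u : ℕ → ℝ → ℝ := fun n => (pr n).1 with hu
  set u' : ℕ → ℝ → ℝ := fun n => (pr n).2 with hu'
  set K : ℕ → ℝ := fun n => ∫ x : ℝ, u' n x ^ 2 with hKdef
  have hK0 : ∀ n, 0 ≤ K n := fun n => integral_nonneg fun x => sq_nonneg _
  have hmne : ∀ n, mass (u n) ≠ 0 := fun n => by rw [hmass n]; exact hμ.ne'
  have hEnub : ∀ n, energy q V (u n) (u' n) ≤ E0 + 1/(n+1) := fun n => (hEn n).le
  have hEnlb : ∀ n, E0 ≤ energy q V (u n) (u' n) := fun n =>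
    hE0mem _ ⟨u n, u' n, hIn n, hmass n, rfl⟩
  set Kb : ℝ := 4 * (E0 + 1 + C) with hKb
  have hKble : ∀ n, K n ≤ Kb := by
    intro n
    have h1 := hCb (u n) (u' n) (hIn n) (hmass n)
    have h2 := hEnub n
    have h3 : 1/((n:ℝ)+1) ≤ 1 := by
      rw [div_le_one (by positivity)]
      simp
    rw [hKb]
    linarith
  have hKb0 : 0 ≤ Kb := le_trans (hK0 0) (hKble 0)
  set S2 : ℝ := μ + Kb + 1 with hS2
  have hS2pos : 0 < S2 := by rw [hS2]; linarith
  have hsup : ∀ n x, u n x ^ 2 ≤ S2 := by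
    intro n x
    have := (hIn n).sq_le (hmne n) one_pos x
    rw [hmass n] at this
    have := this.trans (by
      have := hKble n
      simp only [one_mul, one_div, inv_one]
      linarith : 1 * μ + (1/1) * (∫ y : ℝ, u' n y ^ 2) ≤ μ + Kb)
    rw [hS2]
    linarith
  have habs_sup : ∀ n x, |u n x| ≤ Real.sqrt S2 := by
    intro n x
    rw [← Real.sqrt_sq_eq_abs]
    exact Real.sqrt_le_sqrt (hsup n x)
  -- Hölder bound
  have hhold : ∀ n (x y : ℝ), |u n x - u n y| ≤ Real.sqrt (Kb + 1) * Real.sqrt |x - y| := by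
    have main : ∀ n (x y : ℝ), y ≤ x →
        |u n x - u n y| ≤ Real.sqrt (Kb + 1) * Real.sqrt |x - y| := by
      intro n x y hyx
      have hftc := (hIn n).2.2 y x
      rw [hftc]
      have h1 := abs_intervalIntegral_le_sqrt ((hIn n).aesm (hmne n)) (hIn n).2.1 hyx
      refine h1.trans ?_
      rw [← Real.sqrt_mul (by linarith : (0:ℝ) ≤ Kb + 1)]
      apply Real.sqrt_le_sqrt
      have h2 : |x - y| = x - y := abs_of_nonneg (by linarith)
      rw [h2]
      have h3 := hKble n
      have h4 : (0:ℝ) ≤ x - y := by linarith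
      nlinarith [hK0 n]
    intro n x y
    rcases le_total y x with h | h
    · exact main n x y h
    · rw [abs_sub_comm, abs_sub_comm x y]
      exact main n y x h
  -- extraction of subsequence
  obtain ⟨φ, L, hφmono, hconv0, hconvK, hconvQ⟩ := seq_extract
    (fun n => (u n 0, K n, fun r : ℚ => u n (r:ℝ))) (Real.sqrt S2) Kb (Real.sqrt S2)
    (fun n => habs_sup n 0)
    (fun n => by
      rw [abs_of_nonneg (hK0 n)]
      exact hKble n)
    (fun n r => habs_sup n r)
  -- pointwise limits everywhere
  have hallx : ∀ x : ℝ, ∃ l, Tendsto (fun n => u (φ n) x) atTop (𝓝 l) :=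
    conv_all (fun n x => u (φ n) x) (Real.sqrt (Kb + 1))
      (fun n x y => hhold (φ n) x y) (fun r => ⟨L.2.2 r, hconvQ r⟩)
  choose U hUlim using hallx
  have hUhold : ∀ x y : ℝ, |U x - U y| ≤ Real.sqrt (Kb+1) * Real.sqrt |x - y| := by
    intro x y
    have hl : Tendsto (fun n => |u (φ n) x - u (φ n) y|) atTop (𝓝 |U x - U y|) :=
      ((hUlim x).sub (hUlim y)).abs
    exact le_of_tendsto hl (Eventually.of_forall fun n => hhold (φ n) x y)
  have hUcont : Continuous U := continuous_of_sqrt_hold (Real.sqrt_nonneg _) hUhold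
  -- mass bound for U
  have hmassIcc : ∀ R : ℝ, 0 ≤ R → ∫ x in Set.Icc (-R) R, U x ^ 2 ≤ μ := by
    intro R hR
    have hn : ∀ n, ∫ x in Set.Icc (-R) R, u (φ n) x ^ 2 ≤ μ := by
      intro n
      have h1 : ∫ x in Set.Icc (-R) R, u (φ n) x ^ 2 ≤ ∫ x : ℝ, u (φ n) x ^ 2 :=
        setIntegral_le_integral (hIn (φ n)).1 (Eventually.of_forall fun x => sq_nonneg _)
      rw [show (∫ x : ℝ, u (φ n) x ^ 2) = mass (u (φ n)) from rfl, hmass (φ n)] at h1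
      exact h1
    have hdct : Tendsto (fun n => ∫ x in Set.Icc (-R) R, u (φ n) x ^ 2) atTop
        (𝓝 (∫ x in Set.Icc (-R) R, U x ^ 2)) := by
      refine tendsto_integral_of_dominated_convergence (fun _ => S2) ?_ ?_ ?_ ?_
      · exact fun n => (((hIn (φ n)).continuous (hmne (φ n))).pow 2).aestronglyMeasurable.restrict
      · exact integrable_const S2
      · intro n
        refine Eventually.of_forall fun x => ?_
        rw [Real.norm_eq_abs, abs_of_nonneg (sq_nonneg _)]
        exact hsup (φ n) x
      · exact Eventually.of_forall fun x => ((hUlim x).pow 2)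
    exact le_of_tendsto hdct (Eventually.of_forall hn)
  obtain ⟨hUint, hUmass_le⟩ := integrable_sq_of_bounds U hUcont μ hμ.le hmassIcc
  -- weak limit of derivatives
  set wn : ℕ → Lp ℝ 2 (volume : Measure ℝ) :=
    fun n => ((hIn (φ n)).memLp2 (hmne (φ n))).toLp (u' (φ n)) with hwn
  have hwn_ae : ∀ n, (wn n : ℝ → ℝ) =ᵐ[volume] u' (φ n) := fun n =>
    MemLp.coeFn_toLp _
  have hnormval : ∀ n, ‖wn n‖ = Real.sqrt (K (φ n)) := by
    intro n
    have hsq : ‖wn n‖ ^ 2 = K (φ n) := by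
      rw [← real_inner_self_eq_norm_sq, inner_L2_eq]
      rw [hKdef]
      refine integral_congr_ae ?_
      filter_upwards [hwn_ae n] with x hx
      rw [hx, ← pow_two]
    rw [← hsq, Real.sqrt_sq (norm_nonneg _)]
  have hwn_norm : ∀ n, ‖wn n‖ ≤ Real.sqrt (Kb + 1) := by
    intro n
    rw [hnormval n]
    exact Real.sqrt_le_sqrt (by linarith [hKble (φ n)])
  -- inner products with indicators converge
  have hind_eq : ∀ (n : ℕ) (a b : ℝ), a ≤ b →
      (inner ℝ (wn n) (indL2 a b) : ℝ) = u (φ n) b - u (φ n) a := by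
    intro n a b hab
    rw [inner_indL2]
    have h1 : ∫ x in Set.Ioc a b, (wn n : ℝ → ℝ) x = ∫ x in Set.Ioc a b, u' (φ n) x :=
      integral_congr_ae (ae_restrict_of_ae (hwn_ae n))
    rw [h1, ← intervalIntegral.integral_of_le hab, ← (hIn (φ n)).2.2 a b]
  have hconv_ind : ∀ a b : ℝ, ∃ l,
      Tendsto (fun n => (inner ℝ (wn n) (indL2 a b) : ℝ)) atTop (𝓝 l) := by
    intro a b
    rcases le_or_gt a b with hab | hba
    · refine ⟨U b - U a, ?_⟩
      exact Tendsto.congr (fun n => (hind_eq n a b hab).symm) ((hUlim b).sub (hUlim a))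
    · refine ⟨0, ?_⟩
      have : ∀ n, (inner ℝ (wn n) (indL2 a b) : ℝ) = 0 := by
        intro n
        rw [inner_indL2]
        rw [Set.Ioc_eq_empty (by exact fun h => absurd h (not_lt.2 hba.le))]
        simp
      exact Tendsto.congr (fun n => (this n).symm) tendsto_const_nhds
  obtain ⟨g, hgind, hgself⟩ := weak_limit_L2 wn (Real.sqrt (Kb+1)) hwn_norm hconv_ind
  -- FTC for U with derivative g
  have hgftc_le : ∀ a b : ℝ, a ≤ b → U b - U a = ∫ x in Set.Ioc a b, (g : ℝ → ℝ) x := by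
    intro a b hab
    have h1 : Tendsto (fun n => (inner ℝ (wn n) (indL2 a b) : ℝ)) atTop
        (𝓝 (U b - U a)) :=
      Tendsto.congr (fun n => (hind_eq n a b hab).symm) ((hUlim b).sub (hUlim a))
    have h2 := hgind a b
    have h3 : (inner ℝ g (indL2 a b) : ℝ) = U b - U a := tendsto_nhds_unique h2 h1
    rw [← h3, inner_indL2]
  have hgftc : ∀ a b : ℝ, U b - U a = ∫ x in a..b, (g : ℝ → ℝ) x := by
    intro a b
    rcases le_total a b with hab | hba
    · rw [intervalIntegral.integral_of_le hab]
      exact hgftc_le a b hab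
    · rw [intervalIntegral.integral_symm, intervalIntegral.integral_of_le hba,
        ← hgftc_le b a hba]
      ring
  have hg2 : Integrable (fun x => (g : ℝ → ℝ) x ^ 2) volume :=
    (memLp_two_iff_integrable_sq (Lp.aestronglyMeasurable g)).1 (Lp.memLp g)
  have hgnorm : ∫ x : ℝ, (g : ℝ → ℝ) x ^ 2 = ‖g‖ ^ 2 := by
    rw [← real_inner_self_eq_norm_sq, inner_L2_eq]
    refine integral_congr_ae (Eventually.of_forall fun x => ?_)
    simp [pow_two]
  -- limit of kinetic energies
  set κ : ℝ := L.2.1 with hκdef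
  have hκ0 : 0 ≤ κ := ge_of_tendsto hconvK (Eventually.of_forall fun n => hK0 (φ n))
  have hgκ : ‖g‖ ^ 2 ≤ κ := by
    have hle : ∀ n, (inner ℝ (wn n) g : ℝ) ≤ Real.sqrt (K (φ n)) * ‖g‖ := by
      intro n
      calc (inner ℝ (wn n) g : ℝ) ≤ ‖wn n‖ * ‖g‖ := real_inner_le_norm _ _
        _ = Real.sqrt (K (φ n)) * ‖g‖ := by rw [hnormval n]
    have hrhs : Tendsto (fun n => Real.sqrt (K (φ n)) * ‖g‖) atTop
        (𝓝 (Real.sqrt κ * ‖g‖)) :=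
      ((Real.continuous_sqrt.tendsto κ).comp hconvK).mul_const _
    have h1 : ‖g‖ ^ 2 ≤ Real.sqrt κ * ‖g‖ :=
      le_of_tendsto_of_tendsto' hgself hrhs hle
    nlinarith [Real.sq_sqrt hκ0, Real.sqrt_nonneg κ, norm_nonneg g,
      sq_nonneg (Real.sqrt κ - ‖g‖)]
  -- convergence of nonlinear terms
  have hNconv : Tendsto (fun n => ∑' vv : V, |u (φ n) (vv:ℝ)| ^ q) atTop
      (𝓝 (∑' vv : V, |U (vv:ℝ)| ^ q)) := by
    have h1 : ∀ n, (∑' vv : V, |u (φ n) (vv:ℝ)| ^ q)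
        = ∑ vv : V, |u (φ n) (vv:ℝ)| ^ q := fun n => tsum_fintype _
    have h2 : (∑' vv : V, |U (vv:ℝ)| ^ q) = ∑ vv : V, |U (vv:ℝ)| ^ q := tsum_fintype _
    rw [h2]
    refine Tendsto.congr (fun n => (h1 n).symm) ?_
    refine tendsto_finset_sum _ fun vv _ => ?_
    have habs : Tendsto (fun n => |u (φ n) (vv:ℝ)|) atTop (𝓝 |U (vv:ℝ)|) :=
      (hUlim (vv:ℝ)).abs
    exact (Real.continuousAt_rpow_const _ q (Or.inr hqpos.le)).tendsto.comp habs
  -- energies converge to E0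
  have hEconv : Tendsto (fun n => energy q V (u (φ n)) (u' (φ n))) atTop (𝓝 E0) := by
    have hsq1 : Tendsto (fun n : ℕ => E0 + 1/((n:ℝ)+1)) atTop (𝓝 E0) := by
      have := tendsto_one_div_add_atTop_nhds_zero_nat (𝕜 := ℝ)
      have h2 := (tendsto_const_nhds (x := E0) (f := atTop (α := ℕ))).add this
      simpa using h2
    have hall : Tendsto (fun n => energy q V (u n) (u' n)) atTop (𝓝 E0) :=
      tendsto_of_tendsto_of_tendsto_of_le_of_le tendsto_const_nhds hsq1 hEnlb hEnub
    exact hall.comp (hφmono.tendsto_atTop)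
  -- identity for the limit of nonlinear terms
  have hNid : (1/q) * (∑' vv : V, |U (vv:ℝ)| ^ q) = (1/2) * κ - E0 := by
    have h1 : Tendsto (fun n => (1/q) * (∑' vv : V, |u (φ n) (vv:ℝ)| ^ q)) atTop
        (𝓝 ((1/q) * (∑' vv : V, |U (vv:ℝ)| ^ q))) := hNconv.const_mul _
    have h2 : Tendsto (fun n => (1/2) * K (φ n) - energy q V (u (φ n)) (u' (φ n)))
        atTop (𝓝 ((1/2) * κ - E0)) := (hconvK.const_mul _).sub hEconv
    refine tendsto_nhds_unique (Tendsto.congr (fun n => ?_) h1) h2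
    simp only [hKdef]
    rw [energy]
    ring
  have hN0 : 0 ≤ ∑' vv : V, |U (vv:ℝ)| ^ q := by
    rw [tsum_fintype]
    exact Finset.sum_nonneg fun vv _ => Real.rpow_nonneg (abs_nonneg _) _
  -- mass of U is positive
  set m : ℝ := ∫ x : ℝ, U x ^ 2 with hm
  have hm0 : 0 ≤ m := integral_nonneg fun x => sq_nonneg _
  have hm_pos : 0 < m := by
    rcases hm0.eq_or_lt with hz | hpos
    · exfalso
      have hae : (fun x => U x ^ 2) =ᵐ[volume] (fun _ => (0:ℝ)) := by
        have := (integral_eq_zero_iff_of_nonneg (fun x => sq_nonneg (U x)) hUint).1 hz.symm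
        exact this
      have hU0 : ∀ x, U x = 0 := by
        have hcont2 : Continuous (fun x => U x ^ 2) := hUcont.pow 2
        have := Continuous.ae_eq_iff_eq (μ := (volume : Measure ℝ)) hcont2
          continuous_const |>.1 hae
        intro x
        have hx := congrFun this x
        simpa using pow_eq_zero_iff (n := 2) (by norm_num) |>.1 hx
      have hNz : (∑' vv : V, |U (vv:ℝ)| ^ q) = 0 := by
        rw [tsum_fintype]
        refine Finset.sum_eq_zero fun vv _ => ?_
        rw [hU0 (vv:ℝ), abs_zero]
        exact Real.zero_rpow hqpos.ne'
      rw [hNz, mul_zero] at hNid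
      have hE0eq : E0 = (1/2) * κ := by linarith
      have : E0 < 0 := hneg
      rw [hE0eq] at this
      linarith
    · exact hpos
  have hm_le : m ≤ μ := hUmass_le
  -- scaling to exact mass
  set β : ℝ := Real.sqrt (μ / m) with hβ
  have hβpos : 0 < β := Real.sqrt_pos.2 (div_pos hμ hm_pos)
  have hβsq : β ^ 2 = μ / m := Real.sq_sqrt (le_of_lt (div_pos hμ hm_pos))
  have hβ1 : 1 ≤ β := by
    rw [hβ]
    rw [show (1:ℝ) = Real.sqrt 1 by rw [Real.sqrt_one]]
    apply Real.sqrt_le_sqrt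
    rw [le_div_iff₀ hm_pos]
    linarith
  set Uf : ℝ → ℝ := fun x => β * U x with hUf
  set gf : ℝ → ℝ := fun x => β * (g : ℝ → ℝ) x with hgf
  have hInf : InH1 Uf gf := by
    refine ⟨?_, ?_, ?_⟩
    · have : (fun x => Uf x ^ 2) = fun x => β ^ 2 * U x ^ 2 := by
        funext x; rw [hUf]; ring
      rw [this]
      exact hUint.const_mul _
    · have : (fun x => gf x ^ 2) = fun x => β ^ 2 * (g : ℝ → ℝ) x ^ 2 := by
        funext x; rw [hgf]; ring
      rw [this]
      exact hg2.const_mul _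
    · intro a b
      rw [hUf, hgf]
      simp only []
      rw [intervalIntegral.integral_const_mul]
      rw [← hgftc a b]
      ring
  have hmassf : mass Uf = μ := by
    rw [mass]
    have h1 : (fun x => Uf x ^ 2) = fun x => β ^ 2 * U x ^ 2 := by
      funext x; rw [hUf]; ring
    rw [h1, MeasureTheory.integral_const_mul, ← hm, hβsq]
    field_simp
  have henergyf : energy q V Uf gf ≤ E0 := by
    have hK2 : ∫ x : ℝ, gf x ^ 2 = β ^ 2 * ∫ x : ℝ, (g : ℝ → ℝ) x ^ 2 := by
      have h1 : (fun x => gf x ^ 2) = fun x => β ^ 2 * (g : ℝ → ℝ) x ^ 2 := by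
        funext x; rw [hgf]; ring
      rw [h1, MeasureTheory.integral_const_mul]
    have hNf : (∑' vv : V, |Uf (vv:ℝ)| ^ q) = β ^ q * ∑' vv : V, |U (vv:ℝ)| ^ q := by
      rw [tsum_fintype, tsum_fintype, Finset.mul_sum]
      refine Finset.sum_congr rfl fun vv _ => ?_
      rw [hUf]
      simp only []
      rw [abs_mul, abs_of_pos hβpos, Real.mul_rpow hβpos.le (abs_nonneg _)]
    rw [energy, hK2, hNf, hgnorm]
    have hβq : β ^ (2:ℝ) ≤ β ^ q :=
      Real.rpow_le_rpow_of_exponent_le hβ1 (by linarith)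
    have hβ2 : β ^ (2:ℝ) = β ^ 2 := by
      rw [show ((2:ℝ)) = ((2:ℕ):ℝ) by norm_num, Real.rpow_natCast]
    rw [hβ2] at hβq
    have hstep1 : (1/2) * (β ^ 2 * ‖g‖ ^ 2) - (1/q) * (β ^ q * ∑' vv : V, |U (vv:ℝ)| ^ q)
        ≤ β ^ 2 * ((1/2) * ‖g‖ ^ 2 - (1/q) * ∑' vv : V, |U (vv:ℝ)| ^ q) := by
      have h2 : (1/q) * (β ^ 2 * ∑' vv : V, |U (vv:ℝ)| ^ q)
          ≤ (1/q) * (β ^ q * ∑' vv : V, |U (vv:ℝ)| ^ q) := by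
        apply mul_le_mul_of_nonneg_left _ (by positivity)
        exact mul_le_mul_of_nonneg_right hβq hN0
      nlinarith [h2]
    refine hstep1.trans ?_
    have hinner : (1/2) * ‖g‖ ^ 2 - (1/q) * ∑' vv : V, |U (vv:ℝ)| ^ q ≤ E0 := by
      rw [hNid]
      linarith [hgκ]
    have hβ2ge : 1 ≤ β ^ 2 := by nlinarith
    calc β ^ 2 * ((1/2) * ‖g‖ ^ 2 - (1/q) * ∑' vv : V, |U (vv:ℝ)| ^ q)
        ≤ β ^ 2 * E0 := mul_le_mul_of_nonneg_left hinner (by positivity)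
      _ ≤ E0 := by nlinarith [hneg, hβ2ge]
  have hmemf : energy q V Uf gf ∈ levelSet q V μ := ⟨Uf, gf, hInf, hmassf, rfl⟩
  have hgef : E0 ≤ energy q V Uf gf := hE0mem _ hmemf
  exact ⟨Uf, gf, hInf, hmassf, le_antisymm henergyf hgef⟩
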